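/- With C(τ)_J = [[C_{J₁}, τ C_{J₁J₂}],[τ C_{J₂J₁}, C_{J₂}]] for nonempty J₁, J₂, one has det(C(τ)_J) = det(C_{J₁}) det(C_{J₂}) ∏_{i=1}^{|J₁|} (1 − τ² μᵢ), where μᵢ ∈ [0,1] are the eigenvalues of C_{J₁}^{−1/2} C_{J₁J₂} C_{J₂}^{−1} C_{J₂J₁} C_{J₁}^{−1/2}. -/

import Mathlib

set_option maxHeartbeats 1000000


open Matrix

namespace Matrix.PosSemidef

open scoped ComplexOrder

/-- The positive semidefinite square root of a positive semidefinite matrix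
(the definition of the older Mathlib, removed since). -/
noncomputable def sqrt {n : Type*} [Fintype n] [DecidableEq n] {𝕜 : Type*} [RCLike 𝕜]
    {A : Matrix n n 𝕜} (hA : PosSemidef A) : Matrix n n 𝕜 :=
  hA.1.eigenvectorUnitary.1 * diagonal ((↑) ∘ Real.sqrt ∘ hA.1.eigenvalues) *
  (star hA.1.eigenvectorUnitary : Matrix n n 𝕜)

end Matrix.PosSemidef

/-- For a symmetric positive definite matrix with blocks `C₁₁, C₁₂, C₂₁, C₂₂` (indexed by
two disjoint nonempty index sets), `det(C(τ)) = det C₁₁ · det C₂₂ · ∏ᵢ (1 - τ² μᵢ)`, where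
`μᵢ ∈ [0,1]` are the eigenvalues of `C₁₁^{-1/2} C₁₂ C₂₂⁻¹ C₂₁ C₁₁^{-1/2}`. -/
theorem stmt_11 {m k : ℕ} (hm : 0 < m) (hk : 0 < k)
    (C₁₁ : Matrix (Fin m) (Fin m) ℝ) (C₁₂ : Matrix (Fin m) (Fin k) ℝ)
    (C₂₁ : Matrix (Fin k) (Fin m) ℝ) (C₂₂ : Matrix (Fin k) (Fin k) ℝ)
    (hC : (Matrix.fromBlocks C₁₁ C₁₂ C₂₁ C₂₂).PosDef)
    (hsymm : (Matrix.fromBlocks C₁₁ C₁₂ C₂₁ C₂₂).IsSymm)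
    (h₁₁ : C₁₁.PosDef)
    (hM : (h₁₁.posSemidef.sqrt⁻¹ * C₁₂ * C₂₂⁻¹ * C₂₁ *
      h₁₁.posSemidef.sqrt⁻¹).IsHermitian) :
    (∀ i, hM.eigenvalues i ∈ Set.Icc (0 : ℝ) 1) ∧
    ∀ τ : ℝ,
      (Matrix.fromBlocks C₁₁ (τ • C₁₂) (τ • C₂₁) C₂₂).det =
        C₁₁.det * C₂₂.det * ∏ i, (1 - τ ^ 2 * hM.eigenvalues i) := by
  classical
  set S := h₁₁.posSemidef.sqrt with hSdef
  set M := S⁻¹ * C₁₂ * C₂₂⁻¹ * C₂₁ * S⁻¹ with hMdef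
  have hSps : S.PosSemidef := by
    rw [hSdef]
    unfold Matrix.PosSemidef.sqrt
    have hD : (diagonal (((↑) : ℝ → ℝ) ∘ Real.sqrt ∘ h₁₁.posSemidef.1.eigenvalues)).PosSemidef :=
      PosSemidef.diagonal (fun i => by simp [Real.sqrt_nonneg])
    have := hD.mul_mul_conjTranspose_same
      (h₁₁.posSemidef.1.eigenvectorUnitary : Matrix (Fin m) (Fin m) ℝ)
    rwa [← star_eq_conjTranspose, ← Unitary.coe_star] at this
  have hSS : S * S = C₁₁ := by
    have hspec : C₁₁ = (h₁₁.posSemidef.1.eigenvectorUnitary : Matrix (Fin m) (Fin m) ℝ) *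
        diagonal (RCLike.ofReal ∘ h₁₁.posSemidef.1.eigenvalues) *
        (star h₁₁.posSemidef.1.eigenvectorUnitary : Matrix (Fin m) (Fin m) ℝ) :=
      h₁₁.posSemidef.1.spectral_theorem
    have hUU : (star h₁₁.posSemidef.1.eigenvectorUnitary : Matrix (Fin m) (Fin m) ℝ) *
        (h₁₁.posSemidef.1.eigenvectorUnitary : Matrix (Fin m) (Fin m) ℝ) = 1 :=
      Unitary.coe_star_mul_self _
    conv_rhs => rw [hspec]
    rw [hSdef]
    unfold Matrix.PosSemidef.sqrt
    simp only [Matrix.mul_assoc]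
    rw [← Matrix.mul_assoc (star h₁₁.posSemidef.1.eigenvectorUnitary : Matrix (Fin m) (Fin m) ℝ),
      hUU, Matrix.one_mul, ← Matrix.mul_assoc (diagonal _) (diagonal _), diagonal_mul_diagonal]
    congr 3
    ext i
    simp [Real.mul_self_sqrt (h₁₁.posSemidef.eigenvalues_nonneg i)]
  have hdetS : S.det * S.det = C₁₁.det := by rw [← det_mul, hSS]
  have hSdet : IsUnit S.det := by
    rcases eq_or_ne S.det 0 with h | h
    · exfalso
      have := h₁₁.det_pos
      rw [← hdetS, h, mul_zero] at this
      exact lt_irrefl _ this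
    · exact h.isUnit
  have hS1 : S * S⁻¹ = 1 := mul_nonsing_inv _ hSdet
  have hS2 : S⁻¹ * S = 1 := nonsing_inv_mul _ hSdet
  have hSinvH : S⁻¹ᴴ = S⁻¹ := (hSps.1.inv).eq
  -- symmetry facts
  have h0 : (Matrix.fromBlocks C₁₁ C₁₂ C₂₁ C₂₂)ᵀ = Matrix.fromBlocks C₁₁ C₁₂ C₂₁ C₂₂ := hsymm
  rw [Matrix.fromBlocks_transpose] at h0
  have hC21 : C₂₁ = C₁₂ᴴ := by
    have h := congrArg Matrix.toBlocks₂₁ h0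
    simp only [Matrix.toBlocks_fromBlocks₂₁] at h
    ext i j
    simp only [Matrix.conjTranspose_apply, star_trivial]
    exact (congrFun (congrFun h i) j).symm
  -- C₂₂ is positive definite
  have h₂₂ : C₂₂.PosDef := by
    refine posDef_iff_dotProduct_mulVec.mpr ⟨?_, ?_⟩
    · have h := congrArg Matrix.toBlocks₂₂ h0
      simp only [Matrix.toBlocks_fromBlocks₂₂] at h
      ext i j
      simp only [Matrix.conjTranspose_apply, star_trivial]
      exact congrFun (congrFun h i) j
    · intro x hx
      have hxs : (Sum.elim (0 : Fin m → ℝ) x) ≠ 0 := by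
        intro h
        apply hx
        ext j
        exact congrFun h (Sum.inr j)
      have := hC.dotProduct_mulVec_pos hxs
      simpa [Matrix.fromBlocks_mulVec, sumElim_dotProduct_sumElim] using this
  haveI : Invertible C₂₂ := h₂₂.isUnit.invertible
  -- M is positive semidefinite
  have hMps : M.PosSemidef := by
    have h := (h₂₂.inv.posSemidef).mul_mul_conjTranspose_same (S⁻¹ * C₁₂)
    rw [conjTranspose_mul, hSinvH, ← hC21] at h
    have he : S⁻¹ * C₁₂ * C₂₂⁻¹ * (C₂₁ * S⁻¹) = M := by
      rw [hMdef]; simp only [← Matrix.mul_assoc]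
    rwa [he] at h
  -- 1 - M is positive semidefinite
  have hSchur : (C₁₁ - C₁₂ * C₂₂⁻¹ * C₁₂ᴴ).PosSemidef := by
    rw [← Matrix.PosDef.fromBlocks₂₂ C₁₁ C₁₂ h₂₂, ← hC21]
    exact hC.posSemidef
  have h1M : ((1 : Matrix (Fin m) (Fin m) ℝ) - M).PosSemidef := by
    have h := hSchur.mul_mul_conjTranspose_same S⁻¹
    have key : S⁻¹ * (C₁₁ - C₁₂ * C₂₂⁻¹ * C₁₂ᴴ) * S⁻¹ᴴ = 1 - M := by
      rw [hSinvH, ← hC21, ← hSS, Matrix.mul_sub, Matrix.sub_mul]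
      congr 1
      · calc S⁻¹ * (S * S) * S⁻¹ = S⁻¹ * S * (S * S⁻¹) := by
              simp only [Matrix.mul_assoc]
          _ = 1 := by rw [hS1, hS2, one_mul]
      · rw [hMdef]; simp only [← Matrix.mul_assoc]
    rwa [key] at h
  -- eigenvalue bounds
  have heig : ∀ i, hM.eigenvalues i ∈ Set.Icc (0 : ℝ) 1 := by
    intro i
    refine ⟨hMps.eigenvalues_nonneg i, ?_⟩
    set v : Fin m → ℝ := ⇑(hM.eigenvectorBasis i) with hv
    have hvne : v ≠ 0 := by
      have hne := hM.eigenvectorBasis.orthonormal.ne_zero i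
      intro h
      apply hne
      ext j
      exact congrFun h j
    have hMv : M *ᵥ v = hM.eigenvalues i • v := hM.mulVec_eigenvectorBasis i
    have hpos : 0 < dotProduct v v := by
      rcases Function.ne_iff.mp hvne with ⟨j, hj⟩
      apply Finset.sum_pos' (fun l _ => mul_self_nonneg _)
      exact ⟨j, Finset.mem_univ j, mul_self_pos.mpr hj⟩
    have h2 := h1M.dotProduct_mulVec_nonneg v
    rw [Matrix.sub_mulVec, Matrix.one_mulVec, hMv] at h2
    have h3 : 0 ≤ (1 - hM.eigenvalues i) * dotProduct v v := by
      have he : dotProduct (star v) (v - hM.eigenvalues i • v)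
          = (1 - hM.eigenvalues i) * dotProduct v v := by
        simp [dotProduct_sub, star_trivial, sub_mul, smul_eq_mul]
      rwa [he] at h2
    nlinarith [hpos]
  refine ⟨heig, fun τ => ?_⟩
  -- determinant computation
  have hdet2 : (Matrix.fromBlocks C₁₁ (τ • C₁₂) (τ • C₂₁) C₂₂).det
      = C₂₂.det * (C₁₁ - (τ ^ 2) • (C₁₂ * C₂₂⁻¹ * C₂₁)).det := by
    rw [Matrix.det_fromBlocks₂₂, invOf_eq_nonsing_inv]
    congr 2
    rw [Matrix.smul_mul, Matrix.smul_mul, Matrix.mul_smul, smul_smul, pow_two]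
  have hkey : C₁₁ - (τ ^ 2) • (C₁₂ * C₂₂⁻¹ * C₂₁) = S * (1 - (τ ^ 2) • M) * S := by
    rw [Matrix.mul_sub, Matrix.sub_mul, Matrix.mul_one, hSS]
    congr 1
    rw [mul_smul_comm, Matrix.smul_mul]
    symm
    congr 1
    calc S * M * S = S * S⁻¹ * (C₁₂ * C₂₂⁻¹ * C₂₁ * (S⁻¹ * S)) := by
          rw [hMdef]; simp only [Matrix.mul_assoc]
      _ = C₁₂ * C₂₂⁻¹ * C₂₁ := by rw [hS1, hS2, Matrix.mul_one, Matrix.one_mul]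
  -- diagonalize 1 - τ²M
  set U : Matrix (Fin m) (Fin m) ℝ := (hM.eigenvectorUnitary : Matrix (Fin m) (Fin m) ℝ)
    with hUdef
  have hUdet : U * star U = 1 := Matrix.mem_unitaryGroup_iff.mp hM.eigenvectorUnitary.2
  have hdiag : (1 : Matrix (Fin m) (Fin m) ℝ) - (τ ^ 2) • M
      = U * Matrix.diagonal (fun i => 1 - τ ^ 2 * hM.eigenvalues i) * star U := by
    have hspec : M = U * Matrix.diagonal (RCLike.ofReal ∘ hM.eigenvalues) * star U :=
      hM.spectral_theorem
    have hone : (1 : Matrix (Fin m) (Fin m) ℝ) = U * 1 * star U := by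
      rw [Matrix.mul_one, hUdet]
    have hsmul : (τ ^ 2) • M = U * ((τ ^ 2) • Matrix.diagonal (RCLike.ofReal ∘ hM.eigenvalues))
        * star U := by
      conv_lhs => rw [hspec]
      rw [Matrix.mul_smul, Matrix.smul_mul]
    rw [hsmul]
    conv_lhs => rw [hone]
    rw [← Matrix.sub_mul, ← Matrix.mul_sub]
    congr 2
    ext i j
    rcases eq_or_ne i j with rfl | h
    · simp [Matrix.one_apply_eq, Matrix.diagonal_apply_eq]
    · simp [Matrix.one_apply_ne h, Matrix.diagonal_apply_ne _ h]
  have hdet3 : ((1 : Matrix (Fin m) (Fin m) ℝ) - (τ ^ 2) • M).det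
      = ∏ i, (1 - τ ^ 2 * hM.eigenvalues i) := by
    rw [hdiag, Matrix.det_mul, Matrix.det_mul]
    have hu1 : U.det * (star U).det = 1 := by
      rw [← Matrix.det_mul, hUdet, Matrix.det_one]
    calc U.det * (Matrix.diagonal (fun i => 1 - τ ^ 2 * hM.eigenvalues i)).det * (star U).det
        = (Matrix.diagonal (fun i => 1 - τ ^ 2 * hM.eigenvalues i)).det
          * (U.det * (star U).det) := by ring
      _ = ∏ i, (1 - τ ^ 2 * hM.eigenvalues i) := by
          rw [hu1, mul_one, Matrix.det_diagonal]
  rw [hdet2, hkey, Matrix.det_mul, Matrix.det_mul, hdet3]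
  rw [← hdetS]
  ring
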